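/- arXiv:2507.06114 — 2 statements merged into one kernel-verified Lean document; each statement's English description precedes it below -/
import Mathlib

section
/- (Completed-square estimate.) Let D(F) be convex, let y ∈ Y, y^δ ∈ Y with ‖y − y^δ‖_Y ≤ δ, let x† ∈ D(F) satisfy F(x†) = y and x† = 0 a.e. on Ω∖S, and assume x* = 0 a.e. on Ω∖S. Assume: F is Fréchet differentiable; there exist γ ≥ 0 and ρ > 0 such that ‖F'(x†) − F'(x)‖ ≤ γ‖x† − x‖_{L²} for all x ∈ D(F) with ‖x − x†‖_{L²} < ρ; and there exists ω ∈ Y with x† − x* = F'(x†)*ω. Let 0 < α and let x be a minimizer of J_{α,S,y^δ} over D(F) satisfying ‖x − x†‖_{L²} < ρ. Then (‖F(x) − y^δ‖_Y − α‖ω‖_Y)² + α(1 − γ‖ω‖_Y)‖x − x†‖_{L²}² + (1 − α)‖x − x†‖_{S⁻}² ≤ (δ + α‖ω‖_Y)². -/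
open MeasureTheory Filter
open scoped RealInnerProductSpace ENNReal Topology

noncomputable section

/-- Weak sequential convergence in a real inner product space. -/
def WeakConv {H : Type*} [NormedAddCommGroup H] [InnerProductSpace ℝ H]
    (u : ℕ → H) (x : H) : Prop :=
  ∀ z : H, Tendsto (fun k => ⟪u k, z⟫) atTop (𝓝 ⟪x, z⟫)

/-- The squared `L²` mass of (a representative of) `x : L²(Ω)` over the set `T`. -/
def sqInt {n : ℕ} (Ω : Set (Fin n → ℝ)) (T : Set (Fin n → ℝ))
    (x : Lp ℝ 2 (volume.restrict Ω)) : ℝ :=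
  ∫ t in T, (x t) ^ 2 ∂(volume.restrict Ω)

/-- The Tikhonov-type functional
`J_{α,S,z}(x) = ‖F(x) − z‖² + α‖x − x*‖_{S⁺}² + ‖x − x*‖_{S⁻}²`. -/
def J {n : ℕ} (Ω : Set (Fin n → ℝ)) {Y : Type*} [NormedAddCommGroup Y]
    [InnerProductSpace ℝ Y]
    (F : Lp ℝ 2 (volume.restrict Ω) → Y) (xstar : Lp ℝ 2 (volume.restrict Ω))
    (α : ℝ) (S : Set (Fin n → ℝ)) (z : Y) (x : Lp ℝ 2 (volume.restrict Ω)) : ℝ :=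
  ‖F x - z‖ ^ 2 + (α * sqInt Ω S (x - xstar) + sqInt Ω (Ω \ S) (x - xstar))

/-- `x` is a minimizer of the functional `Jf` over the set `D`. -/
def IsMinimizer {X' : Type*} (Jf : X' → ℝ) (D : Set X') (x : X') : Prop :=
  x ∈ D ∧ ∀ x' ∈ D, Jf x ≤ Jf x'

/-- `x = 0` almost everywhere on `Ω ∖ S`. -/
def ZeroOff {n : ℕ} (Ω S : Set (Fin n → ℝ))
    (x : Lp ℝ 2 (volume.restrict Ω)) : Prop :=
  ∀ᵐ t ∂((volume.restrict Ω).restrict (Ω \ S)), x t = 0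

/-- `xdag` is an `x*`-`S`-minimum-norm solution of `F(x) = y`: it belongs to
`D(F)`, solves `F(xdag) = y`, vanishes a.e. on `Ω ∖ S`, and minimizes
`‖x − x*‖_{L²}` among all such solutions. -/
def IsMNS {n : ℕ} (Ω : Set (Fin n → ℝ)) {Y : Type*} [NormedAddCommGroup Y]
    [InnerProductSpace ℝ Y]
    (D : Set (Lp ℝ 2 (volume.restrict Ω))) (F : Lp ℝ 2 (volume.restrict Ω) → Y)
    (xstar : Lp ℝ 2 (volume.restrict Ω)) (S : Set (Fin n → ℝ)) (y : Y)
    (xdag : Lp ℝ 2 (volume.restrict Ω)) : Prop :=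
  xdag ∈ D ∧ F xdag = y ∧ ZeroOff Ω S xdag ∧
    ∀ x ∈ D, F x = y → ZeroOff Ω S x → ‖xdag - xstar‖ ≤ ‖x - xstar‖


section Helpers

variable {n : ℕ} {Ω : Set (Fin n → ℝ)}

lemma integrable_mul_Lp (v w : Lp ℝ 2 (volume.restrict Ω)) :
    Integrable (fun t => v t * w t) (volume.restrict Ω) := by
  have h := MeasureTheory.L2.integrable_inner (𝕜 := ℝ) v w
  simpa [mul_comm] using h

lemma inner_eq_int (v w : Lp ℝ 2 (volume.restrict Ω)) :
    ⟪v, w⟫ = ∫ t, v t * w t ∂(volume.restrict Ω) := by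
  rw [MeasureTheory.L2.inner_def]
  norm_num
  exact integral_congr_ae (Filter.Eventually.of_forall fun t => mul_comm _ _)

lemma norm_sq_eq_int (v : Lp ℝ 2 (volume.restrict Ω)) :
    ‖v‖ ^ 2 = ∫ t, (v t) ^ 2 ∂(volume.restrict Ω) := by
  rw [← real_inner_self_eq_norm_sq, inner_eq_int]
  refine integral_congr_ae (Filter.Eventually.of_forall fun t => ?_)
  ring

lemma split_int (hΩmeas : MeasurableSet Ω) {S : Set (Fin n → ℝ)}
    (hSmeas : MeasurableSet S) (hSΩ : S ⊆ Ω) {f : (Fin n → ℝ) → ℝ}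
    (hf : Integrable f (volume.restrict Ω)) :
    ∫ t in S, f t ∂(volume.restrict Ω) + ∫ t in Ω \ S, f t ∂(volume.restrict Ω)
      = ∫ t, f t ∂(volume.restrict Ω) := by
  have hu := setIntegral_union (μ := volume.restrict Ω) (f := f)
    disjoint_sdiff_self_right (hΩmeas.diff hSmeas) hf.integrableOn hf.integrableOn
  rw [Set.union_diff_cancel hSΩ] at hu
  have h2 : (volume.restrict Ω).restrict Ω = volume.restrict Ω := by
    rw [Measure.restrict_restrict hΩmeas, Set.inter_self]
  rw [← hu]
  show ∫ t, f t ∂((volume.restrict Ω).restrict Ω) = _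
  rw [h2]

lemma sqInt_nonneg (T : Set (Fin n → ℝ)) (v : Lp ℝ 2 (volume.restrict Ω)) :
    0 ≤ sqInt Ω T v :=
  integral_nonneg fun t => sq_nonneg _

/-- Quadratic Taylor remainder bound from a Lipschitz-type derivative bound
along the segment. -/
lemma taylor_remainder {X Y : Type*} [NormedAddCommGroup X] [NormedSpace ℝ X]
    [NormedAddCommGroup Y] [NormedSpace ℝ Y]
    {D : Set X} (hDconv : Convex ℝ D) {F : X → Y} {F' : X → (X →L[ℝ] Y)}
    (hFderiv : ∀ x ∈ D, HasFDerivWithinAt F (F' x) D x)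
    {xdag x : X} (hxdagD : xdag ∈ D) (hxD : x ∈ D)
    {γ ρ : ℝ}
    (hLip : ∀ z ∈ D, ‖z - xdag‖ < ρ → ‖F' xdag - F' z‖ ≤ γ * ‖xdag - z‖)
    (hxball : ‖x - xdag‖ < ρ) :
    ‖F x - F xdag - (F' xdag) (x - xdag)‖ ≤ γ / 2 * ‖x - xdag‖ ^ 2 := by
  set d := x - xdag with hd
  have hdD : ∀ t ∈ Set.Icc (0:ℝ) 1, xdag + t • d ∈ D := by
    intro t ht
    have h := hDconv hxdagD hxD (sub_nonneg.2 ht.2) ht.1 (by ring)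
    convert h using 1
    rw [hd]; module
  have hball : ∀ t ∈ Set.Icc (0:ℝ) 1, ‖(xdag + t • d) - xdag‖ < ρ := by
    intro t ht
    have : (xdag + t • d) - xdag = t • d := by abel
    rw [this, norm_smul, Real.norm_eq_abs, abs_of_nonneg ht.1]
    calc t * ‖d‖ ≤ 1 * ‖d‖ := by
          apply mul_le_mul_of_nonneg_right ht.2 (norm_nonneg _)
      _ < ρ := by simpa using hxball
  set g : ℝ → Y := fun t => F (xdag + t • d) - t • ((F' xdag) d) - F xdag with hg
  have hgderiv : ∀ t ∈ Set.Icc (0:ℝ) 1,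
      HasDerivWithinAt g ((F' (xdag + t • d)) d - (F' xdag) d) (Set.Icc 0 1) t := by
    intro t ht
    have hp : HasDerivWithinAt (fun s : ℝ => xdag + s • d) d (Set.Icc 0 1) t := by
      simpa using (((hasDerivAt_id t).smul_const d).const_add xdag).hasDerivWithinAt
        (s := Set.Icc (0:ℝ) 1)
    have hF := (hFderiv _ (hdD t ht)).comp_hasDerivWithinAt t hp (fun s hs => hdD s hs)
    have hlin : HasDerivWithinAt (fun s : ℝ => s • ((F' xdag) d)) ((F' xdag) d)
        (Set.Icc 0 1) t := by
      simpa using ((hasDerivAt_id t).smul_const ((F' xdag) d)).hasDerivWithinAt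
        (s := Set.Icc (0:ℝ) 1)
    have := (hF.sub hlin).sub_const (F xdag)
    simpa [Function.comp, hg] using this
  have hcont : ContinuousOn g (Set.Icc 0 1) := fun t ht => (hgderiv t ht).continuousWithinAt
  have hgderiv' : ∀ t ∈ Set.Ico (0:ℝ) 1,
      HasDerivWithinAt g ((F' (xdag + t • d)) d - (F' xdag) d) (Set.Ici t) t := by
    intro t ht
    refine (hgderiv t ⟨ht.1, ht.2.le⟩).mono_of_mem_nhdsWithin ?_
    refine Filter.mem_of_superset (inter_mem_nhdsWithin (Set.Ici t) (Iio_mem_nhds ht.2)) ?_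
    exact fun s hs => ⟨le_trans ht.1 hs.1, hs.2.le⟩
  have hB : ∀ t : ℝ, HasDerivAt (fun t : ℝ => γ * ‖d‖ ^ 2 * (t ^ 2 / 2))
      (γ * ‖d‖ ^ 2 * t) t := by
    intro t
    have h := ((hasDerivAt_pow 2 t).div_const 2).const_mul (γ * ‖d‖ ^ 2)
    refine h.congr_deriv ?_
    push_cast
    ring
  have hbound : ∀ t ∈ Set.Ico (0:ℝ) 1,
      ‖(F' (xdag + t • d)) d - (F' xdag) d‖ ≤ γ * ‖d‖ ^ 2 * t := by
    intro t ht
    have h1 : (F' (xdag + t • d)) d - (F' xdag) d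
        = -(((F' xdag - F' (xdag + t • d))) d) := by
      simp [ContinuousLinearMap.sub_apply]
    rw [h1, norm_neg]
    have h2 : ‖(F' xdag - F' (xdag + t • d)) d‖ ≤ ‖F' xdag - F' (xdag + t • d)‖ * ‖d‖ :=
      ContinuousLinearMap.le_opNorm _ _
    have h3 : ‖F' xdag - F' (xdag + t • d)‖ ≤ γ * ‖xdag - (xdag + t • d)‖ :=
      hLip _ (hdD t ⟨ht.1, ht.2.le⟩) (hball t ⟨ht.1, ht.2.le⟩)
    have h4 : ‖xdag - (xdag + t • d)‖ = t * ‖d‖ := by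
      have : xdag - (xdag + t • d) = -(t • d) := by abel
      rw [this, norm_neg, norm_smul, Real.norm_eq_abs, abs_of_nonneg ht.1]
    calc ‖(F' xdag - F' (xdag + t • d)) d‖ ≤ ‖F' xdag - F' (xdag + t • d)‖ * ‖d‖ := h2
      _ ≤ γ * (t * ‖d‖) * ‖d‖ := by
          rw [← h4]
          exact mul_le_mul_of_nonneg_right h3 (norm_nonneg _)
      _ = γ * ‖d‖ ^ 2 * t := by ring
  have hg0 : ‖g 0‖ ≤ γ * ‖d‖ ^ 2 * ((0:ℝ) ^ 2 / 2) := by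
    simp [hg]
  have key := image_norm_le_of_norm_deriv_right_le_deriv_boundary hcont hgderiv'
    hg0 hB hbound (Set.right_mem_Icc.2 zero_le_one)
  have hg1 : g 1 = F x - F xdag - (F' xdag) d := by
    simp only [hg, one_smul, hd]
    rw [add_sub_cancel]
    abel
  rw [hg1] at key
  calc ‖F x - F xdag - (F' xdag) d‖ ≤ γ * ‖d‖ ^ 2 * ((1:ℝ) ^ 2 / 2) := key
    _ = γ / 2 * ‖d‖ ^ 2 := by ring

end Helpers

set_option maxHeartbeats 1000000 in
/-- **Completed-square estimate** (key step in the convergence-rate proof):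
under convexity of `D(F)`, Fréchet differentiability of `F`, a Lipschitz bound
on the derivative near `x†`, and the source condition `x† − x* = F'(x†)*ω`,
every minimizer `x` of `J_{α,S,y^δ}` over `D(F)` with `‖x − x†‖ < ρ` satisfies
`(‖F(x) − y^δ‖ − α‖ω‖)² + α(1 − γ‖ω‖)‖x − x†‖² + (1 − α)‖x − x†‖_{S⁻}²
  ≤ (δ + α‖ω‖)²`. -/


theorem completed_square_estimate
    {n : ℕ} (Ω : Set (Fin n → ℝ)) (hΩmeas : MeasurableSet Ω)
    (hΩbdd : Bornology.IsBounded Ω)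
    {Y : Type*} [NormedAddCommGroup Y] [InnerProductSpace ℝ Y] [CompleteSpace Y]
    (D : Set (Lp ℝ 2 (volume.restrict Ω))) (hD : D.Nonempty)
    (hDconv : Convex ℝ D)
    (F : Lp ℝ 2 (volume.restrict Ω) → Y)
    (hFcont : ContinuousOn F D)
    (hFweak : ∀ (u : ℕ → Lp ℝ 2 (volume.restrict Ω))
      (x : Lp ℝ 2 (volume.restrict Ω)) (z : Y),
      (∀ k, u k ∈ D) → WeakConv u x → WeakConv (fun k => F (u k)) z →
        x ∈ D ∧ F x = z)
    (xstar : Lp ℝ 2 (volume.restrict Ω))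
    (S : Set (Fin n → ℝ)) (hSmeas : MeasurableSet S) (hSΩ : S ⊆ Ω)
    (hxstar : ZeroOff Ω S xstar)
    (y : Y) (δ : ℝ) (yδ : Y) (hyδ : ‖y - yδ‖ ≤ δ)
    (xdag : Lp ℝ 2 (volume.restrict Ω)) (hxdagD : xdag ∈ D)
    (hxdagF : F xdag = y) (hxdag0 : ZeroOff Ω S xdag)
    (F' : Lp ℝ 2 (volume.restrict Ω) → (Lp ℝ 2 (volume.restrict Ω) →L[ℝ] Y))
    (hFderiv : ∀ x ∈ D, HasFDerivWithinAt F (F' x) D x)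
    (γ : ℝ) (hγ : 0 ≤ γ) (ρ : ℝ) (hρ : 0 < ρ)
    (hLip : ∀ x ∈ D, ‖x - xdag‖ < ρ → ‖F' xdag - F' x‖ ≤ γ * ‖xdag - x‖)
    (ω : Y) (hω : xdag - xstar = ContinuousLinearMap.adjoint (F' xdag) ω)
    (α : ℝ) (hα : 0 < α)
    (x : Lp ℝ 2 (volume.restrict Ω))
    (hx : IsMinimizer (J Ω F xstar α S yδ) D x)
    (hxball : ‖x - xdag‖ < ρ) :
    (‖F x - yδ‖ - α * ‖ω‖) ^ 2 + α * (1 - γ * ‖ω‖) * ‖x - xdag‖ ^ 2 +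
        (1 - α) * sqInt Ω (Ω \ S) (x - xdag) ≤ (δ + α * ‖ω‖) ^ 2 := by
  obtain ⟨hxD, hxmin⟩ := hx
  -- a.e. facts off S
  have hb0 : ∀ᵐ t ∂((volume.restrict Ω).restrict (Ω \ S)), (xdag - xstar) t = 0 := by
    filter_upwards [ae_restrict_of_ae (Lp.coeFn_sub xdag xstar), hxdag0, hxstar]
      with t h1 h2 h3
    rw [h1, Pi.sub_apply, h2, h3, sub_zero]
  -- `sqInt (Ω∖S) (x† − x*) = 0`
  have hBz : sqInt Ω (Ω \ S) (xdag - xstar) = 0 := by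
    refine integral_eq_zero_of_ae ?_
    filter_upwards [hb0] with t ht
    rw [Pi.zero_apply, ht]
    norm_num
  -- `sqInt (Ω∖S) (x − x*) = sqInt (Ω∖S) (x − x†)`
  have hD2 : sqInt Ω (Ω \ S) (x - xstar) = sqInt Ω (Ω \ S) (x - xdag) := by
    refine integral_congr_ae ?_
    filter_upwards [ae_restrict_of_ae (Lp.coeFn_sub x xstar),
      ae_restrict_of_ae (Lp.coeFn_sub x xdag), hxdag0, hxstar] with t h1 h2 h3 h4
    rw [h1, h2, Pi.sub_apply, Pi.sub_apply, h3, h4, sub_zero]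
  -- split the quadratic on S
  have hae : ∀ᵐ t ∂(volume.restrict Ω),
      (x - xstar) t = (x - xdag) t + (xdag - xstar) t := by
    filter_upwards [Lp.coeFn_sub x xstar, Lp.coeFn_sub x xdag, Lp.coeFn_sub xdag xstar]
      with t h1 h2 h3
    simp only [h1, h2, h3, Pi.sub_apply]
    ring
  have i1 : Integrable (fun t => ((x - xdag) t) ^ 2) (volume.restrict Ω) := by
    simpa [pow_two] using integrable_mul_Lp (x - xdag) (x - xdag)
  have i2 : Integrable (fun t => (x - xdag) t * (xdag - xstar) t) (volume.restrict Ω) :=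
    integrable_mul_Lp _ _
  have i3 : Integrable (fun t => ((xdag - xstar) t) ^ 2) (volume.restrict Ω) := by
    simpa [pow_two] using integrable_mul_Lp (xdag - xstar) (xdag - xstar)
  have hC : sqInt Ω S (x - xstar) = sqInt Ω S (x - xdag)
      + 2 * (∫ t in S, (x - xdag) t * (xdag - xstar) t ∂(volume.restrict Ω))
      + sqInt Ω S (xdag - xstar) := by
    have h1 : sqInt Ω S (x - xstar)
        = ∫ t in S, (((x - xdag) t) ^ 2
            + (2 * ((x - xdag) t * (xdag - xstar) t) + ((xdag - xstar) t) ^ 2))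
            ∂(volume.restrict Ω) := by
      refine integral_congr_ae ?_
      filter_upwards [ae_restrict_of_ae hae] with t ht
      rw [ht]; ring
    have i2' : Integrable (fun t => 2 * ((x - xdag) t * (xdag - xstar) t))
        (volume.restrict Ω) := i2.const_mul 2
    have i23 : Integrable (fun t => 2 * ((x - xdag) t * (xdag - xstar) t)
        + ((xdag - xstar) t) ^ 2) (volume.restrict Ω) := i2'.add i3
    rw [h1, integral_add i1.integrableOn i23.integrableOn,
      integral_add i2'.integrableOn i3.integrableOn,
      integral_const_mul]
    unfold sqInt
    ring
  -- the S-integral of the cross term is the full inner product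
  have hI : ∫ t in S, (x - xdag) t * (xdag - xstar) t ∂(volume.restrict Ω)
      = ⟪x - xdag, xdag - xstar⟫ := by
    rw [inner_eq_int, ← split_int hΩmeas hSmeas hSΩ i2]
    have hz : ∫ t in Ω \ S, (x - xdag) t * (xdag - xstar) t ∂(volume.restrict Ω) = 0 := by
      refine integral_eq_zero_of_ae ?_
      filter_upwards [hb0] with t ht
      rw [Pi.zero_apply, ht, mul_zero]
    rw [hz, add_zero]
  have hE : sqInt Ω S (x - xdag) + sqInt Ω (Ω \ S) (x - xdag) = ‖x - xdag‖ ^ 2 := by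
    rw [norm_sq_eq_int]
    exact split_int hΩmeas hSmeas hSΩ i1
  -- minimizer inequality
  have hmin := hxmin xdag hxdagD
  unfold J at hmin
  rw [hxdagF, hC, hI, hD2, hBz] at hmin
  -- Taylor remainder
  have hr : ‖F x - y - (F' xdag) (x - xdag)‖ ≤ γ / 2 * ‖x - xdag‖ ^ 2 := by
    have h := taylor_remainder hDconv hFderiv hxdagD hxD hLip hxball
    rwa [hxdagF] at h
  -- source condition and inner-product bound
  have hP : ⟪x - xdag, xdag - xstar⟫ = ⟪(F' xdag) (x - xdag), ω⟫ := by
    rw [hω, ContinuousLinearMap.adjoint_inner_right]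
  have hPb : -⟪x - xdag, xdag - xstar⟫
      ≤ (‖F x - yδ‖ + δ + γ / 2 * ‖x - xdag‖ ^ 2) * ‖ω‖ := by
    rw [hP]
    have hrw : -((F' xdag) (x - xdag))
        = (y - yδ) + (yδ - F x) + (F x - y - (F' xdag) (x - xdag)) := by abel
    have h1 : -⟪(F' xdag) (x - xdag), ω⟫ = ⟪-((F' xdag) (x - xdag)), ω⟫ := by
      rw [inner_neg_left]
    rw [h1, hrw]
    calc ⟪(y - yδ) + (yδ - F x) + (F x - y - (F' xdag) (x - xdag)), ω⟫
        ≤ ‖(y - yδ) + (yδ - F x) + (F x - y - (F' xdag) (x - xdag))‖ * ‖ω‖ :=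
          real_inner_le_norm _ _
      _ ≤ (‖y - yδ‖ + ‖yδ - F x‖ + ‖F x - y - (F' xdag) (x - xdag)‖) * ‖ω‖ := by
          apply mul_le_mul_of_nonneg_right (norm_add₃_le) (norm_nonneg _)
      _ ≤ (‖F x - yδ‖ + δ + γ / 2 * ‖x - xdag‖ ^ 2) * ‖ω‖ := by
          apply mul_le_mul_of_nonneg_right _ (norm_nonneg _)
          rw [norm_sub_rev yδ (F x)]
          linarith [hyδ, hr]
  -- assemble
  have hδ0 : (0:ℝ) ≤ δ := le_trans (norm_nonneg _) hyδ
  have hdnsq : ‖y - yδ‖ ^ 2 ≤ δ ^ 2 := by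
    nlinarith [norm_nonneg (y - yδ)]
  have hA2 : 0 ≤ sqInt Ω (Ω \ S) (x - xdag) := sqInt_nonneg _ _
  have hE' : α * (sqInt Ω S (x - xdag) + sqInt Ω (Ω \ S) (x - xdag))
      = α * ‖x - xdag‖ ^ 2 := by rw [hE]
  have hPb2 := mul_le_mul_of_nonneg_left hPb (by linarith : (0:ℝ) ≤ 2 * α)
  nlinarith [hmin, hdnsq, hA2, hE', hPb2, hα.le]
end
end

section
/- (Explicit error bounds.) Let D(F) be convex, let y ∈ Y, y^δ ∈ Y with ‖y − y^δ‖_Y ≤ δ, let x† ∈ D(F) satisfy F(x†) = y and x† = 0 a.e. on Ω∖S, and assume x* = 0 a.e. on Ω∖S. Assume: F is Fréchet differentiable; there exist γ ≥ 0 and ρ > 0 such that ‖F'(x†) − F'(x)‖ ≤ γ‖x† − x‖_{L²} for all x ∈ D(F) with ‖x − x†‖_{L²} < ρ; there exists ω ∈ Y with x† − x* = F'(x†)*ω; and γ‖ω‖_Y < 1. Let 0 < α < 1 and let x be a minimizer of J_{α,S,y^δ} over D(F) with ‖x − x†‖_{L²} < ρ. Then: (a) ‖F(x) − y^δ‖_Y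 ≤ δ + 2α‖ω‖_Y; (b) ‖x − x†‖_{S⁻} ≤ (δ + α‖ω‖_Y)/√(1 − α); and (c) ‖x − x†‖_{L²} ≤ (δ + α‖ω‖_Y)/(√α · (1 − γ‖ω‖_Y)^{1/2}). -/
open MeasureTheory Filter
open scoped RealInnerProductSpace ENNReal Topology

noncomputable section

open Set in
lemma taylor_aux {X Y : Type*} [NormedAddCommGroup X] [NormedSpace ℝ X]
    [NormedAddCommGroup Y] [NormedSpace ℝ Y]
    {D : Set X} (hDconv : Convex ℝ D) {F : X → Y} {F' : X → X →L[ℝ] Y}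
    (hFderiv : ∀ x ∈ D, HasFDerivWithinAt F (F' x) D x)
    {a b : X} (ha : a ∈ D) (hb : b ∈ D) {C : ℝ}
    (hbound : ∀ t ∈ Set.Icc (0:ℝ) 1, ‖(F' (a + t • (b - a)) - F' a) (b - a)‖ ≤ C * t) :
    ‖F b - F a - F' a (b - a)‖ ≤ C / 2 := by
  set c : ℝ → X := fun t => a + t • (b - a) with hc
  have hmaps : Set.MapsTo c (Icc 0 1) D := fun t ht => hDconv.add_smul_sub_mem ha hb ht
  set f : ℝ → Y := fun t => F (c t) - F a - t • (F' a (b - a)) with hf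
  set f' : ℝ → Y := fun t => F' (c t) (b - a) - F' a (b - a) with hf'
  have hderiv : ∀ t ∈ Icc (0:ℝ) 1, HasDerivWithinAt f (f' t) (Icc 0 1) t := by
    intro t ht
    have hcd : HasDerivWithinAt c (b - a) (Icc 0 1) t := by
      exact (((hasDerivAt_id t).smul_const (b - a)).const_add a).hasDerivWithinAt.congr_deriv (one_smul ℝ _)
    have hFc : HasDerivWithinAt (fun s => F (c s)) (F' (c t) (b - a)) (Icc 0 1) t :=
      (hFderiv (c t) (hmaps ht)).comp_hasDerivWithinAt t hcd hmaps
    have hlin : HasDerivWithinAt (fun s : ℝ => s • (F' a (b - a))) (F' a (b - a)) (Icc 0 1) t := by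
      simpa using ((hasDerivAt_id t).smul_const (F' a (b - a))).hasDerivWithinAt
    exact (hFc.sub_const (F a)).sub hlin
  have hcont : ContinuousOn f (Icc 0 1) := fun t ht => (hderiv t ht).continuousWithinAt
  have hf'r : ∀ t ∈ Ico (0:ℝ) 1, HasDerivWithinAt f (f' t) (Ici t) t := by
    intro t ht
    exact ((hderiv t (Ico_subset_Icc_self ht)).mono
      (Icc_subset_Icc ht.1 le_rfl)).mono_of_mem_nhdsWithin
      (Icc_mem_nhdsGE_of_mem ⟨le_rfl, ht.2⟩)
  have hB : ∀ t : ℝ, HasDerivAt (fun s : ℝ => C / 2 * s ^ 2) (C * t) t := by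
    intro t
    have := (hasDerivAt_pow 2 t).const_mul (C / 2)
    exact this.congr_deriv (by norm_num; ring)
  have key := image_norm_le_of_norm_deriv_right_le_deriv_boundary hcont hf'r
    (B := fun s => C / 2 * s ^ 2) (B' := fun s => C * s)
    (by simp [hf, hc]) hB
    (by
      intro t ht
      have h := hbound t (Ico_subset_Icc_self ht)
      rw [ContinuousLinearMap.sub_apply] at h
      exact h)
  have h1 := key (right_mem_Icc.2 zero_le_one)
  simpa [hf, hc, add_sub_cancel] using h1

lemma sqInt_split {n : ℕ} {Ω S : Set (Fin n → ℝ)} (hΩ : MeasurableSet Ω)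
    (hS : MeasurableSet S) (hSΩ : S ⊆ Ω) (v : Lp ℝ 2 (volume.restrict Ω)) :
    sqInt Ω S v + sqInt Ω (Ω \ S) v = ‖v‖ ^ 2 := by
  have hint : Integrable (fun t => (v t)^2) (volume.restrict Ω) := by
    have h := L2.integrable_inner (𝕜 := ℝ) v v
    refine h.congr (Filter.Eventually.of_forall fun t => ?_)
    simp [RCLike.inner_apply, sq]
  have hnorm : ‖v‖^2 = ∫ t, (v t)^2 ∂(volume.restrict Ω) := by
    rw [← real_inner_self_eq_norm_sq, L2.inner_def]
    congr 1; ext t; simp [RCLike.inner_apply, sq]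
  unfold sqInt
  rw [hnorm, ← setIntegral_union Set.disjoint_sdiff_right
    (hΩ.diff hS) hint.integrableOn hint.integrableOn,
    Set.union_diff_cancel hSΩ]
  rw [show ∫ t in Ω, (v t)^2 ∂(volume.restrict Ω) = ∫ t, (v t)^2 ∂(volume.restrict Ω) by
    rw [Measure.restrict_restrict hΩ, Set.inter_self]]

set_option maxHeartbeats 1000000 in
/-- **Explicit error bounds**: under convexity of `D(F)`, Fréchet
differentiability of `F`, a Lipschitz bound on the derivative near `x†`, the
source condition `x† − x* = F'(x†)*ω`, and the smallness condition
`γ‖ω‖ < 1`, every minimizer `x` of `J_{α,S,y^δ}` over `D(F)` with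
`‖x − x†‖ < ρ` (for `0 < α < 1`) satisfies
(a) `‖F(x) − y^δ‖ ≤ δ + 2α‖ω‖`,
(b) `‖x − x†‖_{S⁻} ≤ (δ + α‖ω‖)/√(1 − α)`, and
(c) `‖x − x†‖ ≤ (δ + α‖ω‖)/(√α (1 − γ‖ω‖)^{1/2})`. -/
theorem explicit_error_bounds
    {n : ℕ} (Ω : Set (Fin n → ℝ)) (hΩmeas : MeasurableSet Ω)
    (hΩbdd : Bornology.IsBounded Ω)
    {Y : Type*} [NormedAddCommGroup Y] [InnerProductSpace ℝ Y] [CompleteSpace Y]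
    (D : Set (Lp ℝ 2 (volume.restrict Ω))) (hD : D.Nonempty)
    (hDconv : Convex ℝ D)
    (F : Lp ℝ 2 (volume.restrict Ω) → Y)
    (hFcont : ContinuousOn F D)
    (hFweak : ∀ (u : ℕ → Lp ℝ 2 (volume.restrict Ω))
      (x : Lp ℝ 2 (volume.restrict Ω)) (z : Y),
      (∀ k, u k ∈ D) → WeakConv u x → WeakConv (fun k => F (u k)) z →
        x ∈ D ∧ F x = z)
    (xstar : Lp ℝ 2 (volume.restrict Ω))
    (S : Set (Fin n → ℝ)) (hSmeas : MeasurableSet S) (hSΩ : S ⊆ Ω)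
    (hxstar : ZeroOff Ω S xstar)
    (y : Y) (δ : ℝ) (yδ : Y) (hyδ : ‖y - yδ‖ ≤ δ)
    (xdag : Lp ℝ 2 (volume.restrict Ω)) (hxdagD : xdag ∈ D)
    (hxdagF : F xdag = y) (hxdag0 : ZeroOff Ω S xdag)
    (F' : Lp ℝ 2 (volume.restrict Ω) → (Lp ℝ 2 (volume.restrict Ω) →L[ℝ] Y))
    (hFderiv : ∀ x ∈ D, HasFDerivWithinAt F (F' x) D x)
    (γ : ℝ) (hγ : 0 ≤ γ) (ρ : ℝ) (hρ : 0 < ρ)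
    (hLip : ∀ x ∈ D, ‖x - xdag‖ < ρ → ‖F' xdag - F' x‖ ≤ γ * ‖xdag - x‖)
    (ω : Y) (hω : xdag - xstar = ContinuousLinearMap.adjoint (F' xdag) ω)
    (hsmall : γ * ‖ω‖ < 1)
    (α : ℝ) (hα0 : 0 < α) (hα1 : α < 1)
    (x : Lp ℝ 2 (volume.restrict Ω))
    (hx : IsMinimizer (J Ω F xstar α S yδ) D x)
    (hxball : ‖x - xdag‖ < ρ) :
    ‖F x - yδ‖ ≤ δ + 2 * α * ‖ω‖ ∧
    Real.sqrt (sqInt Ω (Ω \ S) (x - xdag)) ≤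
      (δ + α * ‖ω‖) / Real.sqrt (1 - α) ∧
    ‖x - xdag‖ ≤ (δ + α * ‖ω‖) /
      (Real.sqrt α * Real.sqrt (1 - γ * ‖ω‖)) := by
  obtain ⟨hxD, hmin⟩ := hx
  have hxdag0' : ∀ᵐ t ∂((volume.restrict Ω).restrict (Ω \ S)), xdag t = 0 := hxdag0
  have hxstar' : ∀ᵐ t ∂((volume.restrict Ω).restrict (Ω \ S)), xstar t = 0 := hxstar
  -- basic nonnegativity
  have hw0 : (0:ℝ) ≤ ‖ω‖ := norm_nonneg _
  have hδ0 : (0:ℝ) ≤ δ := le_trans (norm_nonneg _) hyδ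
  have hδ2 : ‖y - yδ‖ ^ 2 ≤ δ ^ 2 := pow_le_pow_left₀ (norm_nonneg _) hyδ 2
  -- integral identities
  have h1 : sqInt Ω (Ω \ S) (xdag - xstar) = 0 := by
    unfold sqInt
    refine integral_eq_zero_of_ae ?_
    filter_upwards [ae_restrict_of_ae (Lp.coeFn_sub xdag xstar), hxdag0', hxstar']
      with t ha hb hc
    simp only [Pi.zero_apply]
    rw [ha, Pi.sub_apply, hb, hc]
    ring
  have h2 : sqInt Ω (Ω \ S) (x - xstar) = sqInt Ω (Ω \ S) (x - xdag) := by
    unfold sqInt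
    refine integral_congr_ae ?_
    filter_upwards [ae_restrict_of_ae (Lp.coeFn_sub x xstar),
      ae_restrict_of_ae (Lp.coeFn_sub x xdag), hxdag0', hxstar'] with t ha hb hc hd
    rw [ha, hb, Pi.sub_apply, Pi.sub_apply, hc, hd]
  have hb2 : (0:ℝ) ≤ sqInt Ω (Ω \ S) (x - xdag) :=
    integral_nonneg fun t => sq_nonneg _
  have hsx : sqInt Ω S (x - xstar)
      = ‖x - xstar‖ ^ 2 - sqInt Ω (Ω \ S) (x - xdag) := by
    have h := sqInt_split hΩmeas hSmeas hSΩ (x - xstar)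
    rw [h2] at h; linarith
  have hsd : sqInt Ω S (xdag - xstar) = ‖xdag - xstar‖ ^ 2 := by
    have h := sqInt_split hΩmeas hSmeas hSΩ (xdag - xstar)
    rw [h1] at h; linarith
  -- minimality inequality
  have hJ := hmin xdag hxdagD
  unfold J at hJ
  rw [hxdagF, hsx, hsd, h1, h2] at hJ
  -- norm expansion
  have hexp : ‖x - xstar‖ ^ 2 = ‖x - xdag‖ ^ 2
      + 2 * ⟪x - xdag, xdag - xstar⟫ + ‖xdag - xstar‖ ^ 2 := by
    have h : x - xstar = (x - xdag) + (xdag - xstar) := by abel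
    rw [h, norm_add_sq_real]
  -- Taylor estimate
  have hTay : ‖F x - F xdag - F' xdag (x - xdag)‖ ≤ γ * ‖x - xdag‖ ^ 2 / 2 := by
    have h := taylor_aux (C := γ * ‖x - xdag‖ ^ 2) hDconv hFderiv hxdagD hxD ?_
    · linarith
    intro t ht
    have hct : xdag + t • (x - xdag) ∈ D := hDconv.add_smul_sub_mem hxdagD hxD ht
    have hn : ‖(xdag + t • (x - xdag)) - xdag‖ = t * ‖x - xdag‖ := by
      simp [norm_smul, abs_of_nonneg ht.1]
    have hρ' : ‖(xdag + t • (x - xdag)) - xdag‖ < ρ := by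
      rw [hn]
      nlinarith [norm_nonneg (x - xdag), ht.1, ht.2]
    have hL : ‖F' (xdag + t • (x - xdag)) - F' xdag‖ ≤ γ * (t * ‖x - xdag‖) := by
      calc ‖F' (xdag + t • (x - xdag)) - F' xdag‖
          = ‖F' xdag - F' (xdag + t • (x - xdag))‖ := norm_sub_rev _ _
        _ ≤ γ * ‖xdag - (xdag + t • (x - xdag))‖ := hLip _ hct hρ'
        _ = γ * (t * ‖x - xdag‖) := by rw [norm_sub_rev xdag, hn]
    calc ‖(F' (xdag + t • (x - xdag)) - F' xdag) (x - xdag)‖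
        ≤ ‖F' (xdag + t • (x - xdag)) - F' xdag‖ * ‖x - xdag‖ :=
          ContinuousLinearMap.le_opNorm _ _
      _ ≤ (γ * (t * ‖x - xdag‖)) * ‖x - xdag‖ :=
          mul_le_mul_of_nonneg_right hL (norm_nonneg _)
      _ = γ * ‖x - xdag‖ ^ 2 * t := by ring
  -- source condition / inner product estimate
  have hIP : ⟪x - xdag, xdag - xstar⟫ = ⟪F' xdag (x - xdag), ω⟫ := by
    rw [hω, ContinuousLinearMap.adjoint_inner_right]
  have hdecomp : F' xdag (x - xdag)
      = (F x - yδ) + (yδ - y) - (F x - F xdag - F' xdag (x - xdag)) := by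
    rw [hxdagF]; abel
  have hKey : ⟪x - xdag, xdag - xstar⟫
      ≥ -(‖F x - yδ‖ * ‖ω‖) - δ * ‖ω‖ - γ * ‖x - xdag‖ ^ 2 / 2 * ‖ω‖ := by
    rw [hIP, hdecomp, inner_sub_left, inner_add_left]
    have e1 : ⟪F x - yδ, ω⟫ ≥ -(‖F x - yδ‖ * ‖ω‖) := by
      have := abs_real_inner_le_norm (F x - yδ) ω
      have := neg_abs_le ⟪F x - yδ, ω⟫
      linarith
    have e2 : ⟪yδ - y, ω⟫ ≥ -(δ * ‖ω‖) := by
      have h1 := abs_real_inner_le_norm (yδ - y) ω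
      have h2 := neg_abs_le ⟪yδ - y, ω⟫
      have h3 : ‖yδ - y‖ ≤ δ := by rw [norm_sub_rev]; exact hyδ
      have h4 : ‖yδ - y‖ * ‖ω‖ ≤ δ * ‖ω‖ := mul_le_mul_of_nonneg_right h3 (norm_nonneg ω)
      linarith
    have e3 : ⟪F x - F xdag - F' xdag (x - xdag), ω⟫
        ≤ γ * ‖x - xdag‖ ^ 2 / 2 * ‖ω‖ := by
      have h1 := abs_real_inner_le_norm (F x - F xdag - F' xdag (x - xdag)) ω
      have h2 := le_abs_self ⟪F x - F xdag - F' xdag (x - xdag), ω⟫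
      have h4 : ‖F x - F xdag - F' xdag (x - xdag)‖ * ‖ω‖
          ≤ γ * ‖x - xdag‖ ^ 2 / 2 * ‖ω‖ :=
        mul_le_mul_of_nonneg_right hTay (norm_nonneg ω)
      linarith
    linarith
  -- the master inequality
  have hexp' : α * ‖x - xstar‖ ^ 2 = α * ‖x - xdag‖ ^ 2
      + 2 * α * ⟪x - xdag, xdag - xstar⟫ + α * ‖xdag - xstar‖ ^ 2 := by
    rw [hexp]; ring
  have hKey' : 2 * α * ⟪x - xdag, xdag - xstar⟫
      ≥ 2 * α * (-(‖F x - yδ‖ * ‖ω‖) - δ * ‖ω‖ - γ * ‖x - xdag‖ ^ 2 / 2 * ‖ω‖) := by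
    exact mul_le_mul_of_nonneg_left hKey.le (by linarith : (0:ℝ) ≤ 2 * α)
  have hmaster : (‖F x - yδ‖ - α * ‖ω‖) ^ 2
      + α * (1 - γ * ‖ω‖) * ‖x - xdag‖ ^ 2
      + (1 - α) * sqInt Ω (Ω \ S) (x - xdag) ≤ (δ + α * ‖ω‖) ^ 2 := by
    linarith [hJ, hexp', hKey', hδ2]
  have hd2 : (0:ℝ) ≤ ‖x - xdag‖ ^ 2 := sq_nonneg _
  have hγω : (0:ℝ) < 1 - γ * ‖ω‖ := by linarith
  have hK0 : (0:ℝ) ≤ δ + α * ‖ω‖ := by positivity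
  refine ⟨?_, ?_, ?_⟩
  · -- (a)
    nlinarith [hmaster, mul_pos hα0 hγω, mul_nonneg (mul_pos hα0 hγω).le hd2,
      mul_nonneg (by linarith : (0:ℝ) ≤ 1 - α) hb2, norm_nonneg (F x - yδ), hK0]
  · -- (b)
    have h1α : (0:ℝ) < 1 - α := by linarith
    rw [le_div_iff₀ (Real.sqrt_pos.2 h1α)]
    calc Real.sqrt (sqInt Ω (Ω \ S) (x - xdag)) * Real.sqrt (1 - α)
        = Real.sqrt (sqInt Ω (Ω \ S) (x - xdag) * (1 - α)) :=
          (Real.sqrt_mul hb2 _).symm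
      _ ≤ Real.sqrt ((δ + α * ‖ω‖) ^ 2) := by
          refine Real.sqrt_le_sqrt ?_
          nlinarith [hmaster, sq_nonneg (‖F x - yδ‖ - α * ‖ω‖),
            mul_nonneg (mul_pos hα0 hγω).le hd2]
      _ = δ + α * ‖ω‖ := Real.sqrt_sq hK0
  · -- (c)
    have hprod : (0:ℝ) < α * (1 - γ * ‖ω‖) := mul_pos hα0 hγω
    rw [← Real.sqrt_mul hα0.le, le_div_iff₀ (Real.sqrt_pos.2 hprod)]
    calc ‖x - xdag‖ * Real.sqrt (α * (1 - γ * ‖ω‖))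
        = Real.sqrt (‖x - xdag‖ ^ 2) * Real.sqrt (α * (1 - γ * ‖ω‖)) := by
          rw [Real.sqrt_sq (norm_nonneg _)]
      _ = Real.sqrt (‖x - xdag‖ ^ 2 * (α * (1 - γ * ‖ω‖))) :=
          (Real.sqrt_mul hd2 _).symm
      _ ≤ Real.sqrt ((δ + α * ‖ω‖) ^ 2) := by
          refine Real.sqrt_le_sqrt ?_
          nlinarith [hmaster, sq_nonneg (‖F x - yδ‖ - α * ‖ω‖),
            mul_nonneg (by linarith : (0:ℝ) ≤ 1 - α) hb2]
      _ = δ + α * ‖ω‖ := Real.sqrt_sq hK0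
end
end
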